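/- With Λ, Λ', Λ'' as above and q_m(t) defined by ∑_{m≥0} q_m(t) z^m = exp(∑_{k=1}^{n-1} t_{2k-1} z^{2k-1}), the matrix exponential satisfies exp(∑_{k=1}^{n-1} t_{2k-1} Λ^{2k-1} + s Λ') = ∑_{m=0}^{2n-2} q_m(t) Λ^m + s Λ' - (-1)^n s² Λ''. -/

import Mathlib

open Finset Matrix

noncomputable def genFn (n : ℕ) (t : ℕ → ℂ) : PowerSeries ℂ :=
  ∑ k ∈ Finset.Icc 1 (n-1), (PowerSeries.monomial (2*k-1)) (t (2*k-1))

noncomputable def qn (n : ℕ) (t : ℕ → ℂ) (m : ℕ) : ℂ :=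
  ∑ k ∈ Finset.range (m+1), PowerSeries.coeff m (genFn n t ^ k) / (Nat.factorial k : ℂ)

noncomputable def Lam (n : ℕ) : Matrix (Fin (2*n)) (Fin (2*n)) ℂ :=
  Matrix.of fun i j =>
    (if (j:ℕ)+1 = (i:ℕ)+2 ∧ (i:ℕ)+1 ≠ n then (1:ℂ) else 0)
    + (if (i:ℕ)+1 = n-1 ∧ (j:ℕ)+1 = n+1 then 1 else 0)
    + (if (i:ℕ)+1 = n ∧ (j:ℕ)+1 = n+2 then 1 else 0)

noncomputable def Lam' (n : ℕ) : Matrix (Fin (2*n)) (Fin (2*n)) ℂ :=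
  Matrix.of fun i j =>
    (if (i:ℕ)+1 = 1 ∧ (j:ℕ)+1 = n then (-1:ℂ) else 0)
    + (if (i:ℕ)+1 = 1 ∧ (j:ℕ)+1 = n+1 then 1 else 0)
    + (if (i:ℕ)+1 = n ∧ (j:ℕ)+1 = 2*n then (-1:ℂ)^n else 0)
    + (if (i:ℕ)+1 = n+1 ∧ (j:ℕ)+1 = 2*n then -(-1:ℂ)^n else 0)

noncomputable def Lam'' (n : ℕ) : Matrix (Fin (2*n)) (Fin (2*n)) ℂ :=
  Matrix.of fun i j => if (i:ℕ)+1 = 1 ∧ (j:ℕ)+1 = 2*n then (1:ℂ) else 0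


def wt (n : ℕ) (i : Fin (2*n)) : ℕ := if (i:ℕ) < n then (i:ℕ) else (i:ℕ) - 1

lemma lam_step {n : ℕ} (hn : 2 ≤ n) {i j : Fin (2*n)} (h : Lam n i j ≠ 0) :
    wt n j = wt n i + 1 := by
  have hi := i.isLt
  have hj := j.isLt
  unfold Lam at h
  simp only [Matrix.of_apply] at h
  unfold wt
  split_ifs at h ⊢ <;> first | omega | (exfalso; exact h (by norm_num))

lemma lam_pow_step {n : ℕ} (hn : 2 ≤ n) (m : ℕ) :
    ∀ i j : Fin (2*n), (Lam n ^ m) i j ≠ 0 → wt n j = wt n i + m := by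
  induction m with
  | zero =>
    intro i j h
    rw [pow_zero] at h
    rw [Matrix.one_apply] at h
    by_cases hij : i = j
    · subst hij; omega
    · simp [hij] at h
  | succ m ih =>
    intro i j h
    rw [pow_succ, Matrix.mul_apply] at h
    obtain ⟨k, -, hk⟩ := Finset.exists_ne_zero_of_sum_ne_zero h
    have h1 := ih i k (left_ne_zero_of_mul hk)
    have h2 := lam_step hn (right_ne_zero_of_mul hk)
    omega

lemma lam_pow_zero {n : ℕ} (hn : 2 ≤ n) : Lam n ^ (2*n-1) = 0 := by
  ext i j
  simp only [Matrix.zero_apply]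
  by_contra h
  have := lam_pow_step hn (2*n-1) i j h
  have hi := i.isLt
  have hj := j.isLt
  unfold wt at this
  split_ifs at this <;> omega

lemma lam'_decomp {n : ℕ} (hn : 2 ≤ n) :
    Lam' n = Matrix.single (⟨0, by omega⟩ : Fin (2*n)) ⟨n-1, by omega⟩ (-1:ℂ)
      + Matrix.single (⟨0, by omega⟩ : Fin (2*n)) ⟨n, by omega⟩ (1:ℂ)
      + Matrix.single (⟨n-1, by omega⟩ : Fin (2*n)) ⟨2*n-1, by omega⟩ ((-1:ℂ)^n)
      + Matrix.single (⟨n, by omega⟩ : Fin (2*n)) ⟨2*n-1, by omega⟩ (-(-1:ℂ)^n) := by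
  ext i j
  have hi := i.isLt
  have hj := j.isLt
  simp only [Lam', Matrix.of_apply, Matrix.add_apply, Matrix.single, Fin.ext_iff, Fin.val_mk,
    Matrix.of_apply, and_true, true_and]
  split_ifs <;> first | omega | ring

lemma lam''_decomp {n : ℕ} (hn : 2 ≤ n) :
    Lam'' n = Matrix.single (⟨0, by omega⟩ : Fin (2*n)) ⟨2*n-1, by omega⟩ (1:ℂ) := by
  ext i j
  have hi := i.isLt
  have hj := j.isLt
  simp only [Lam'', Matrix.of_apply, Matrix.single, Fin.ext_iff, Fin.val_mk, and_true, true_and]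
  split_ifs <;> first | omega | ring

-- column lemmas
lemma lam_mul_E0 {n : ℕ} (hn : 2 ≤ n) (q : Fin (2*n)) (c : ℂ) :
    Lam n * Matrix.single (⟨0, by omega⟩ : Fin (2*n)) q c = 0 := by
  ext a b
  by_cases hb : b = q
  · subst hb
    rw [Matrix.mul_single_apply_same, Matrix.zero_apply]
    have ha := a.isLt
    simp only [Lam, Matrix.of_apply, Fin.val_mk]
    split_ifs <;> first | omega | ring
  · rw [Matrix.mul_single_apply_of_ne (hbj := hb), Matrix.zero_apply]

lemma lam_mul_En1 {n : ℕ} (hn : 2 ≤ n) (q : Fin (2*n)) (c : ℂ) :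
    Lam n * Matrix.single (⟨n-1, by omega⟩ : Fin (2*n)) q c
      = Matrix.single (⟨n-2, by omega⟩ : Fin (2*n)) q c := by
  ext a b
  by_cases hb : b = q
  · subst hb
    rw [Matrix.mul_single_apply_same]
    have ha := a.isLt
    simp only [Lam, Matrix.of_apply, Fin.val_mk, Matrix.single, Fin.ext_iff, and_true, true_and]
    split_ifs <;> first | omega | ring
  · rw [Matrix.mul_single_apply_of_ne (hbj := hb),
      Matrix.single_apply_of_ne]
    exact fun h => hb h.2.symm

lemma lam_mul_En {n : ℕ} (hn : 2 ≤ n) (q : Fin (2*n)) (c : ℂ) :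
    Lam n * Matrix.single (⟨n, by omega⟩ : Fin (2*n)) q c
      = Matrix.single (⟨n-2, by omega⟩ : Fin (2*n)) q c := by
  ext a b
  by_cases hb : b = q
  · subst hb
    rw [Matrix.mul_single_apply_same]
    have ha := a.isLt
    simp only [Lam, Matrix.of_apply, Fin.val_mk, Matrix.single, Fin.ext_iff, and_true, true_and]
    split_ifs <;> first | omega | ring
  · rw [Matrix.mul_single_apply_of_ne (hbj := hb),
      Matrix.single_apply_of_ne]
    exact fun h => hb h.2.symm

-- row lemmas
lemma En1_mul_lam {n : ℕ} (hn : 2 ≤ n) (p : Fin (2*n)) (c : ℂ) :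
    Matrix.single p (⟨n-1, by omega⟩ : Fin (2*n)) c * Lam n
      = Matrix.single p (⟨n+1, by omega⟩ : Fin (2*n)) c := by
  ext a b
  by_cases ha : a = p
  · subst ha
    rw [Matrix.single_mul_apply_same]
    have hb := b.isLt
    simp only [Lam, Matrix.of_apply, Fin.val_mk, Matrix.single, Fin.ext_iff, and_true, true_and]
    split_ifs <;> first | omega | ring
  · rw [Matrix.single_mul_apply_of_ne (h := ha),
      Matrix.single_apply_of_ne]
    exact fun h => ha h.1.symm

lemma En_mul_lam {n : ℕ} (hn : 2 ≤ n) (p : Fin (2*n)) (c : ℂ) :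
    Matrix.single p (⟨n, by omega⟩ : Fin (2*n)) c * Lam n
      = Matrix.single p (⟨n+1, by omega⟩ : Fin (2*n)) c := by
  ext a b
  by_cases ha : a = p
  · subst ha
    rw [Matrix.single_mul_apply_same]
    have hb := b.isLt
    simp only [Lam, Matrix.of_apply, Fin.val_mk, Matrix.single, Fin.ext_iff, and_true, true_and]
    split_ifs <;> first | omega | ring
  · rw [Matrix.single_mul_apply_of_ne (h := ha),
      Matrix.single_apply_of_ne]
    exact fun h => ha h.1.symm

lemma Ez_mul_lam {n : ℕ} (hn : 2 ≤ n) (p : Fin (2*n)) (c : ℂ) :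
    Matrix.single p (⟨2*n-1, by omega⟩ : Fin (2*n)) c * Lam n = 0 := by
  ext a b
  by_cases ha : a = p
  · subst ha
    rw [Matrix.single_mul_apply_same, Matrix.zero_apply]
    have hb := b.isLt
    simp only [Lam, Matrix.of_apply, Fin.val_mk]
    split_ifs <;> first | omega | ring
  · rw [Matrix.single_mul_apply_of_ne (h := ha), Matrix.zero_apply]

lemma mul_lam_lam' {n : ℕ} (hn : 2 ≤ n) : Lam n * Lam' n = 0 := by
  rw [lam'_decomp hn, mul_add, mul_add, mul_add, lam_mul_E0 hn, lam_mul_E0 hn,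
    lam_mul_En1 hn, lam_mul_En hn, zero_add, zero_add, ← Matrix.single_add]
  simp

lemma mul_lam'_lam {n : ℕ} (hn : 2 ≤ n) : Lam' n * Lam n = 0 := by
  rw [lam'_decomp hn, add_mul, add_mul, add_mul, En1_mul_lam hn, En_mul_lam hn,
    Ez_mul_lam hn, Ez_mul_lam hn, add_zero, add_zero, ← Matrix.single_add]
  simp

lemma EmulE {N : ℕ} (i j k l : Fin N) (c d : ℂ) :
    Matrix.single i j c * Matrix.single k l d
      = if (j:ℕ) = (k:ℕ) then Matrix.single i l (c*d) else 0 := by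
  split_ifs with h
  · have : j = k := Fin.ext h
    subst this
    exact Matrix.single_mul_single_same c i j l d
  · exact Matrix.single_mul_single_of_ne c i j k (fun hh => h (congrArg Fin.val hh)) d

lemma mul_lam'_lam' {n : ℕ} (hn : 2 ≤ n) :
    Lam' n * Lam' n = (-2 * (-1:ℂ)^n) • Lam'' n := by
  rw [lam'_decomp hn, lam''_decomp hn, Matrix.smul_single]
  simp only [add_mul, mul_add, EmulE, Fin.val_mk]
  split_ifs <;>
    first
      | omega
      | (simp only [add_zero, zero_add, smul_eq_mul, mul_one,
            ← Matrix.single_add]; congr 1; ring)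

lemma mul_lam'_lam'' {n : ℕ} (hn : 2 ≤ n) : Lam' n * Lam'' n = 0 := by
  rw [lam'_decomp hn, lam''_decomp hn]
  simp only [add_mul, EmulE, Fin.val_mk]
  split_ifs <;> first | omega | simp

lemma mul_lam''_lam' {n : ℕ} (hn : 2 ≤ n) : Lam'' n * Lam' n = 0 := by
  rw [lam'_decomp hn, lam''_decomp hn]
  simp only [mul_add, EmulE, Fin.val_mk]
  split_ifs <;> first | omega | simp

lemma mul_lam_lam'' {n : ℕ} (hn : 2 ≤ n) : Lam n * Lam'' n = 0 := by
  rw [lam''_decomp hn, lam_mul_E0 hn]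

-- exp of a nilpotent matrix is a finite sum
lemma exp_nilp {N : ℕ} (A : Matrix (Fin N) (Fin N) ℂ) {K : ℕ} (h : A ^ K = 0) :
    NormedSpace.exp A = ∑ k ∈ Finset.range K, ((k.factorial : ℂ)⁻¹) • A ^ k := by
  rw [NormedSpace.exp_eq_tsum (𝕂 := ℂ)]
  refine tsum_eq_sum ?_
  intro b hb
  simp only [Finset.mem_range, not_lt] at hb
  have hzero : A ^ b = 0 := by
    rw [show b = K + (b - K) by omega, pow_add, h, zero_mul]
  rw [hzero, smul_zero]

lemma tri_sum {M : Type*} [AddCommMonoid M] (K : ℕ) (F : ℕ → ℕ → M)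
    (hF : ∀ a b, K ≤ a + b → F a b = 0) :
    ∑ a ∈ Finset.range K, ∑ b ∈ Finset.range K, F a b
      = ∑ m ∈ Finset.range K, ∑ p ∈ Finset.HasAntidiagonal.antidiagonal m, F p.1 p.2 := by
  have hdisj : (↑(Finset.range K) : Set ℕ).PairwiseDisjoint
      (fun m => (Finset.HasAntidiagonal.antidiagonal m : Finset (ℕ × ℕ))) := by
    intro x _ y _ hxy
    refine Finset.disjoint_left.mpr fun p hp hq => hxy ?_
    rw [Finset.HasAntidiagonal.mem_antidiagonal] at hp hq
    omega
  rw [← Finset.sum_biUnion hdisj, ← Finset.sum_product']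
  refine (Finset.sum_subset ?_ ?_).symm
  · intro p hp
    rw [Finset.mem_biUnion] at hp
    obtain ⟨m, hm, hpm⟩ := hp
    rw [Finset.HasAntidiagonal.mem_antidiagonal] at hpm
    rw [Finset.mem_range] at hm
    rw [Finset.mem_product, Finset.mem_range, Finset.mem_range]
    omega
  · intro p _ hp
    refine hF p.1 p.2 ?_
    by_contra hlt
    exact hp (Finset.mem_biUnion.mpr ⟨p.1 + p.2, Finset.mem_range.mpr (by omega),
      Finset.HasAntidiagonal.mem_antidiagonal.mpr rfl⟩)

section phi
variable {N : ℕ} (M : Matrix (Fin N) (Fin N) ℂ) {K : ℕ}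

lemma phi_mul (hM : M ^ K = 0) (f g : PowerSeries ℂ) :
    (∑ a ∈ Finset.range K, PowerSeries.coeff a f • M ^ a)
      * (∑ b ∈ Finset.range K, PowerSeries.coeff b g • M ^ b)
      = ∑ m ∈ Finset.range K, PowerSeries.coeff m (f * g) • M ^ m := by
  rw [Finset.sum_mul_sum]
  have step : ∀ a b : ℕ,
      (PowerSeries.coeff a f • M ^ a) * (PowerSeries.coeff b g • M ^ b)
        = (PowerSeries.coeff a f * PowerSeries.coeff b g) • M ^ (a+b) := by
    intro a b
    rw [smul_mul_assoc, mul_smul_comm, smul_smul, pow_add]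
  calc ∑ a ∈ Finset.range K, ∑ b ∈ Finset.range K,
        (PowerSeries.coeff a f • M ^ a) * (PowerSeries.coeff b g • M ^ b)
      = ∑ a ∈ Finset.range K, ∑ b ∈ Finset.range K,
        (PowerSeries.coeff a f * PowerSeries.coeff b g) • M ^ (a+b) := by
        exact Finset.sum_congr rfl fun a _ => Finset.sum_congr rfl fun b _ => step a b
    _ = ∑ m ∈ Finset.range K, ∑ p ∈ Finset.HasAntidiagonal.antidiagonal m,
        (PowerSeries.coeff p.1 f * PowerSeries.coeff p.2 g) • M ^ (p.1+p.2) := by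
        refine tri_sum K _ fun a b hab => ?_
        rw [show a+b = K + (a+b-K) by omega, pow_add, hM, zero_mul, smul_zero]
    _ = ∑ m ∈ Finset.range K, PowerSeries.coeff m (f * g) • M ^ m := by
        refine Finset.sum_congr rfl fun m _ => ?_
        rw [PowerSeries.coeff_mul, Finset.sum_smul]
        refine Finset.sum_congr rfl fun p hp => ?_
        rw [Finset.HasAntidiagonal.mem_antidiagonal] at hp
        rw [hp]

lemma phi_one (hK : 0 < K) :
    ∑ m ∈ Finset.range K, PowerSeries.coeff m (1 : PowerSeries ℂ) • M ^ m = 1 := by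
  have : ∀ m ∈ Finset.range K, PowerSeries.coeff m (1 : PowerSeries ℂ) • M ^ m
      = if m = 0 then (1:Matrix (Fin N) (Fin N) ℂ) else 0 := by
    intro m _
    rw [PowerSeries.coeff_one]
    split_ifs with h
    · subst h; simp
    · simp
  rw [Finset.sum_congr rfl this, Finset.sum_ite_eq' (Finset.range K) 0 fun _ => (1 : Matrix (Fin N) (Fin N) ℂ)]
  rw [if_pos (Finset.mem_range.mpr hK)]

lemma phi_pow (hM : M ^ K = 0) (hK : 0 < K) (f : PowerSeries ℂ) (j : ℕ) :
    (∑ a ∈ Finset.range K, PowerSeries.coeff a f • M ^ a) ^ j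
      = ∑ m ∈ Finset.range K, PowerSeries.coeff m (f ^ j) • M ^ m := by
  induction j with
  | zero => rw [pow_zero, pow_zero, phi_one M hK]
  | succ j ih => rw [pow_succ, pow_succ, ih, phi_mul M hM]

end phi

-- order lemma
lemma coeff_pow_eq_zero {g : PowerSeries ℂ} (h0 : PowerSeries.constantCoeff g = 0) :
    ∀ j m : ℕ, m < j → PowerSeries.coeff m (g ^ j) = 0 := by
  intro j
  induction j with
  | zero => intro m hm; omega
  | succ j ih =>
    intro m hm
    rw [pow_succ, PowerSeries.coeff_mul]
    refine Finset.sum_eq_zero fun p hp => ?_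
    rw [Finset.HasAntidiagonal.mem_antidiagonal] at hp
    by_cases h1 : p.1 < j
    · rw [ih p.1 h1, zero_mul]
    · have h2 : p.2 = 0 := by omega
      rw [h2, PowerSeries.coeff_zero_eq_constantCoeff, h0, mul_zero]

lemma constantCoeff_genFn (n : ℕ) (t : ℕ → ℂ) :
    PowerSeries.constantCoeff (genFn n t) = 0 := by
  rw [← PowerSeries.coeff_zero_eq_constantCoeff_apply, genFn, map_sum]
  refine Finset.sum_eq_zero fun k hk => ?_
  rw [Finset.mem_Icc] at hk
  rw [PowerSeries.coeff_monomial, if_neg (by omega)]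

theorem stmt6 (n : ℕ) (hn : 2 ≤ n) (t : ℕ → ℂ) (s : ℂ) :
    NormedSpace.exp (∑ k ∈ Finset.Icc 1 (n-1), t (2*k-1) • Lam n ^ (2*k-1) + s • Lam' n)
      = ∑ m ∈ Finset.range (2*n-1), qn n t m • Lam n ^ m + s • Lam' n
        - ((-1:ℂ)^n * s^2) • Lam'' n := by
  have hK : 0 < 2*n-1 := by omega
  have hMz : Lam n ^ (2*n-1) = 0 := lam_pow_zero hn
  have hg0 := constantCoeff_genFn n t
  set A : Matrix (Fin (2*n)) (Fin (2*n)) ℂ :=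
    ∑ k ∈ Finset.Icc 1 (n-1), t (2*k-1) • Lam n ^ (2*k-1) with hAdef
  -- A in phi form
  have h1 : ∀ m : ℕ, PowerSeries.coeff m (genFn n t)
      = ∑ k ∈ Finset.Icc 1 (n-1), if m = 2*k-1 then t (2*k-1) else 0 := by
    intro m
    rw [genFn, map_sum]
    exact Finset.sum_congr rfl fun k _ => PowerSeries.coeff_monomial _ _ _
  have hA : A = ∑ m ∈ Finset.range (2*n-1), PowerSeries.coeff m (genFn n t) • Lam n ^ m := by
    symm
    calc ∑ m ∈ Finset.range (2*n-1), PowerSeries.coeff m (genFn n t) • Lam n ^ m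
        = ∑ m ∈ Finset.range (2*n-1), ∑ k ∈ Finset.Icc 1 (n-1),
            (if m = 2*k-1 then t (2*k-1) • Lam n ^ m else 0) := by
          refine Finset.sum_congr rfl fun m _ => ?_
          rw [h1, Finset.sum_smul]
          exact Finset.sum_congr rfl fun k _ => by rw [ite_smul, zero_smul]
      _ = ∑ k ∈ Finset.Icc 1 (n-1), ∑ m ∈ Finset.range (2*n-1),
            (if m = 2*k-1 then t (2*k-1) • Lam n ^ m else 0) := Finset.sum_comm
      _ = A := by
          rw [hAdef]
          refine Finset.sum_congr rfl fun k hk => ?_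
          rw [Finset.mem_Icc] at hk
          rw [Finset.sum_ite_eq' (Finset.range (2*n-1)) (2*k-1)
            (fun m => t (2*k-1) • Lam n ^ m)]
          rw [if_pos (Finset.mem_range.mpr (by omega))]
  have hApow : ∀ j : ℕ, A ^ j
      = ∑ m ∈ Finset.range (2*n-1), PowerSeries.coeff m (genFn n t ^ j) • Lam n ^ m := by
    intro j
    rw [hA]
    exact phi_pow (Lam n) hMz hK (genFn n t) j
  have hAnil : A ^ (2*n-1) = 0 := by
    rw [hApow]
    refine Finset.sum_eq_zero fun m hm => ?_
    rw [coeff_pow_eq_zero hg0 _ _ (Finset.mem_range.mp hm), zero_smul]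
  -- products with powers
  have honeL : ∀ m : ℕ, 1 ≤ m → Lam n ^ m * Lam' n = 0 := by
    intro m hm
    rw [show m = (m-1)+1 by omega, pow_succ, mul_assoc, mul_lam_lam' hn, mul_zero]
  have honeL'' : ∀ m : ℕ, 1 ≤ m → Lam n ^ m * Lam'' n = 0 := by
    intro m hm
    rw [show m = (m-1)+1 by omega, pow_succ, mul_assoc, mul_lam_lam'' hn, mul_zero]
  have honeR : ∀ m : ℕ, 1 ≤ m → Lam' n * Lam n ^ m = 0 := by
    intro m hm
    rw [show m = 1+(m-1) by omega, pow_add, pow_one, ← mul_assoc, mul_lam'_lam hn, zero_mul]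
  have hAB : A * (s • Lam' n) = 0 := by
    rw [hAdef, Finset.sum_mul]
    refine Finset.sum_eq_zero fun k hk => ?_
    rw [Finset.mem_Icc] at hk
    rw [smul_mul_assoc, mul_smul_comm, honeL _ (by omega), smul_zero, smul_zero]
  have hBA : (s • Lam' n) * A = 0 := by
    rw [hAdef, Finset.mul_sum]
    refine Finset.sum_eq_zero fun k hk => ?_
    rw [Finset.mem_Icc] at hk
    rw [smul_mul_assoc, mul_smul_comm, honeR _ (by omega), smul_zero, smul_zero]
  have hcomm : Commute A (s • Lam' n) := by
    show A * (s • Lam' n) = (s • Lam' n) * A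
    rw [hAB, hBA]
  rw [Matrix.exp_add_of_commute A (s • Lam' n) hcomm]
  -- exp of B
  have hB2 : (s • Lam' n) * (s • Lam' n) = (s^2 * (-2*(-1:ℂ)^n)) • Lam'' n := by
    rw [smul_mul_assoc, mul_smul_comm, mul_lam'_lam' hn, smul_smul, smul_smul]
    congr 1
    ring
  have hB3 : (s • Lam' n) ^ 3 = 0 := by
    rw [pow_succ, pow_two, hB2, smul_mul_assoc, mul_smul_comm, mul_lam''_lam' hn,
      smul_zero, smul_zero]
  have hexpB : NormedSpace.exp (s • Lam' n)
      = 1 + s • Lam' n - ((-1:ℂ)^n * s^2) • Lam'' n := by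
    have hc : (((2:ℕ).factorial : ℂ))⁻¹ * (s^2 * (-2*(-1:ℂ)^n)) = -((-1:ℂ)^n * s^2) := by
      norm_num [Nat.factorial]
      ring
    rw [exp_nilp _ hB3, Finset.sum_range_succ, Finset.sum_range_succ, Finset.sum_range_one,
      pow_zero, pow_one, pow_two, hB2, smul_smul, smul_smul, hc, neg_smul, ← sub_eq_add_neg]
    norm_num [Nat.factorial]
  -- exp of A
  have hexpA : NormedSpace.exp A = ∑ m ∈ Finset.range (2*n-1), qn n t m • Lam n ^ m := by
    rw [exp_nilp _ hAnil]
    calc ∑ j ∈ Finset.range (2*n-1), ((j.factorial : ℂ)⁻¹) • A ^ j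
        = ∑ j ∈ Finset.range (2*n-1), ∑ m ∈ Finset.range (2*n-1),
            ((j.factorial : ℂ)⁻¹ * PowerSeries.coeff m (genFn n t ^ j)) • Lam n ^ m := by
          refine Finset.sum_congr rfl fun j _ => ?_
          rw [hApow, Finset.smul_sum]
          exact Finset.sum_congr rfl fun m _ => by rw [smul_smul]
      _ = ∑ m ∈ Finset.range (2*n-1), (∑ j ∈ Finset.range (2*n-1),
            (j.factorial : ℂ)⁻¹ * PowerSeries.coeff m (genFn n t ^ j)) • Lam n ^ m := by
          rw [Finset.sum_comm]
          exact Finset.sum_congr rfl fun m _ => by rw [Finset.sum_smul]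
      _ = ∑ m ∈ Finset.range (2*n-1), qn n t m • Lam n ^ m := by
          refine Finset.sum_congr rfl fun m hm => ?_
          rw [Finset.mem_range] at hm
          congr 1
          have hsub : ∑ j ∈ Finset.range (2*n-1),
              (j.factorial : ℂ)⁻¹ * PowerSeries.coeff m (genFn n t ^ j)
              = ∑ j ∈ Finset.range (m+1),
              (j.factorial : ℂ)⁻¹ * PowerSeries.coeff m (genFn n t ^ j) := by
            refine (Finset.sum_subset (Finset.range_subset_range.mpr (by omega)) ?_).symm
            intro j _ hj
            rw [Finset.mem_range, not_lt] at hj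
            rw [coeff_pow_eq_zero hg0 _ _ (by omega), mul_zero]
          rw [hsub, qn]
          exact Finset.sum_congr rfl fun j _ => by rw [div_eq_mul_inv, mul_comm]
  have hqn0 : qn n t 0 = 1 := by
    simp [qn]
  have hexpAL' : (∑ m ∈ Finset.range (2*n-1), qn n t m • Lam n ^ m) * Lam' n = Lam' n := by
    rw [Finset.sum_mul, show 2*n-1 = (2*n-2)+1 by omega, Finset.sum_range_succ']
    have hz : ∀ i ∈ Finset.range (2*n-2),
        (qn n t (i+1) • Lam n ^ (i+1)) * Lam' n = 0 := by
      intro i _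
      rw [smul_mul_assoc, honeL (i+1) (by omega), smul_zero]
    rw [Finset.sum_congr rfl hz, Finset.sum_const_zero, zero_add, pow_zero, smul_mul_assoc,
      one_mul, hqn0, one_smul]
  have hexpAL'' : (∑ m ∈ Finset.range (2*n-1), qn n t m • Lam n ^ m) * Lam'' n = Lam'' n := by
    rw [Finset.sum_mul, show 2*n-1 = (2*n-2)+1 by omega, Finset.sum_range_succ']
    have hz : ∀ i ∈ Finset.range (2*n-2),
        (qn n t (i+1) • Lam n ^ (i+1)) * Lam'' n = 0 := by
      intro i _
      rw [smul_mul_assoc, honeL'' (i+1) (by omega), smul_zero]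
    rw [Finset.sum_congr rfl hz, Finset.sum_const_zero, zero_add, pow_zero, smul_mul_assoc,
      one_mul, hqn0, one_smul]
  rw [hexpA, hexpB, mul_sub, mul_add, mul_one, mul_smul_comm, mul_smul_comm,
    hexpAL', hexpAL'']
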